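/- Let K be a field, N ≥ 2 an integer, and x_1, …, x_N pairwise distinct elements of K with x_N = 1. Let 𝔛 be the N×N Vandermonde matrix with entries 𝔛_{j,i} = x_i^{j-1} for 1 ≤ i, j ≤ N; then 𝔛 is invertible, and writing (y_{i,j}) = 𝔛^{-1}, for every index 1 ≤ i ≤ N-1 and every scalar c ∈ K one has ∑_{j=1}^{N} y_{i,j} · (j·1_K - c) = (∏_{1 ≤ m ≤ N-1, m ≠ i}(1 - x_m)) / (∏_{1 ≤ m ≤ N, m ≠ i}(x_i - x_m)). In particular this sum is independent of c. (When N is odd, the denominator ∏_{m ≠ i}(x_i - x_m) equals ∏_{m ≠ i}(x_m - x_i).) -/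

import Mathlib

open Matrix Polynomial Finset

lemma fin_derivative_prod {K : Type*} [CommRing K] {ι : Type*} [DecidableEq ι]
    (s : Finset ι) (f : ι → K[X]) :
    derivative (∏ i ∈ s, f i) = ∑ i ∈ s, (∏ j ∈ s.erase i, f j) * derivative (f i) := by
  classical
  induction s using Finset.induction_on with
  | empty => simp
  | insert _ _ ha ih =>
    rename_i a s
    rw [Finset.prod_insert ha, derivative_mul, Finset.sum_insert ha, Finset.erase_insert ha,
      ih, Finset.mul_sum, mul_comm (derivative (f a))]
    congr 1
    refine Finset.sum_congr rfl fun i hi => ?_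
    rw [Finset.erase_insert_of_ne (ne_of_mem_of_not_mem hi ha).symm,
      Finset.prod_insert (fun h => ha (Finset.mem_of_mem_erase h)), mul_assoc]

theorem stmt1 (K : Type*) [Field K] (N : ℕ) (hN : 2 ≤ N) (x : Fin N → K)
    (hx : Function.Injective x) (hlast : x ⟨N - 1, by omega⟩ = 1) :
    IsUnit ((Matrix.vandermonde x)ᵀ) ∧
    ∀ i : Fin N, (i : ℕ) < N - 1 → ∀ c : K,
      ∑ j : Fin N, ((Matrix.vandermonde x)ᵀ)⁻¹ i j * ((((j : ℕ) + 1 : ℕ) : K) - c) =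
        (∏ m ∈ (Finset.univ.erase (⟨N - 1, by omega⟩ : Fin N)).erase i, (1 - x m)) /
          (∏ m ∈ Finset.univ.erase i, (x i - x m)) := by
  classical
  set last : Fin N := ⟨N - 1, by omega⟩ with hlastdef
  have hinj : Set.InjOn x (Finset.univ : Finset (Fin N)) := hx.injOn
  set P : Fin N → K[X] := fun i => Lagrange.basis Finset.univ x i with hP
  have hdeg : ∀ i : Fin N, (P i).natDegree < N := by
    intro i
    rw [hP, Lagrange.natDegree_basis hinj (Finset.mem_univ i)]
    simp only [Finset.card_univ, Fintype.card_fin]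
    omega
  set C : Matrix (Fin N) (Fin N) K := Matrix.of fun i j => (P i).coeff j with hC
  have hCM : C * (Matrix.vandermonde x)ᵀ = 1 := by
    ext i j
    rw [Matrix.mul_apply]
    simp only [hC, Matrix.of_apply, Matrix.transpose_apply, Matrix.vandermonde_apply]
    have := Polynomial.eval_eq_sum_range' (hdeg i) (x j)
    rw [← Fin.sum_univ_eq_sum_range] at this
    rw [← this]
    by_cases hij : i = j
    · subst hij
      rw [Lagrange.eval_basis_self hinj (Finset.mem_univ i), Matrix.one_apply_eq]
    · rw [Lagrange.eval_basis_of_ne hij (Finset.mem_univ j), Matrix.one_apply_ne hij]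
  have hunit : IsUnit ((Matrix.vandermonde x)ᵀ) := by
    rw [Matrix.isUnit_iff_isUnit_det, Matrix.det_transpose, isUnit_iff_ne_zero,
      Matrix.det_vandermonde_ne_zero_iff]
    exact hx
  refine ⟨hunit, fun i hi c => ?_⟩
  have hinv : ((Matrix.vandermonde x)ᵀ)⁻¹ = C := Matrix.inv_eq_left_inv hCM
  rw [hinv]
  have hine : i ≠ last := by
    intro h; rw [h] at hi; simp [hlastdef] at hi
  -- P i eval 1 = 0
  have heval0 : (P i).eval 1 = 0 := by
    rw [← hlast]
    exact Lagrange.eval_basis_of_ne hine (Finset.mem_univ last)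
  -- sum of coeffs = 0
  have hsumc : ∑ j : Fin N, (P i).coeff j = 0 := by
    have := Polynomial.eval_eq_sum_range' (hdeg i) (1 : K)
    rw [← Fin.sum_univ_eq_sum_range] at this
    simpa [heval0] using this.symm
  have hcoeffN : (P i).coeff N = 0 := Polynomial.coeff_eq_zero_of_natDegree_lt (hdeg i)
  have hderivdeg : (derivative (P i)).natDegree < N :=
    lt_of_le_of_lt (Polynomial.natDegree_derivative_le _) (by have := hdeg i; omega)
  have hderiv : (derivative (P i)).eval 1 = ∑ k ∈ Finset.range N, (P i).coeff k * (k : K) := by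
    rw [Polynomial.eval_eq_sum_range' hderivdeg]
    simp only [one_pow, mul_one, Polynomial.coeff_derivative]
    have h := Finset.sum_range_succ' (fun k => (P i).coeff k * (k : K)) N
    rw [Finset.sum_range_succ] at h
    simp only [Nat.cast_zero, mul_zero, add_zero, hcoeffN, zero_mul] at h
    have h2 : ∑ k ∈ Finset.range N, (P i).coeff (k + 1) * ((k : K) + 1)
        = ∑ k ∈ Finset.range N, (P i).coeff (k + 1) * (((k + 1 : ℕ)) : K) :=
      Finset.sum_congr rfl fun k _ => by push_cast; ring
    rw [h2]
    exact h.symm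
  have hLHS : ∑ j : Fin N, C i j * ((((j : ℕ) + 1 : ℕ) : K) - c)
      = (derivative (P i)).eval 1 := by
    have h1 : ∑ j : Fin N, C i j * ((((j : ℕ) + 1 : ℕ) : K) - c)
        = ∑ j : Fin N, ((P i).coeff j * ((j : ℕ) : K) + (P i).coeff j * (1 - c)) := by
      refine Finset.sum_congr rfl fun j _ => ?_
      simp only [hC, Matrix.of_apply]
      push_cast
      ring
    rw [h1, Finset.sum_add_distrib, ← Finset.sum_mul, hsumc, zero_mul, add_zero, hderiv,
      ← Fin.sum_univ_eq_sum_range (fun k => (P i).coeff k * (k : K))]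
  rw [hLHS]
  -- now compute derivative eval
  have hbdd : ∀ m : Fin N, derivative (Lagrange.basisDivisor (x i) (x m))
      = Polynomial.C (x i - x m)⁻¹ := by
    intro m
    rw [Lagrange.basisDivisor]
    simp
  have hbde : ∀ m : Fin N, (Lagrange.basisDivisor (x i) (x m)).eval 1
      = (x i - x m)⁻¹ * (1 - x m) := by
    intro m
    rw [Lagrange.basisDivisor]
    simp
  have hlastmem : last ∈ Finset.univ.erase i := Finset.mem_erase.mpr ⟨hine.symm, Finset.mem_univ _⟩
  have hPdef : P i = ∏ m ∈ Finset.univ.erase i, Lagrange.basisDivisor (x i) (x m) := rfl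
  rw [hPdef, fin_derivative_prod, Polynomial.eval_finset_sum]
  rw [Finset.sum_eq_single last]
  · simp only [Polynomial.eval_mul, hbdd, Polynomial.eval_C, Polynomial.eval_prod]
    simp only [hbde]
    rw [Finset.prod_mul_distrib, Finset.prod_inv_distrib]
    have hsplit : ∏ m ∈ Finset.univ.erase i, (x i - x m)
        = (x i - x last) * ∏ m ∈ (Finset.univ.erase i).erase last, (x i - x m) :=
      (Finset.mul_prod_erase _ _ hlastmem).symm
    rw [Finset.erase_right_comm (a := i) (b := last)] at hsplit ⊢
    rw [hsplit, div_eq_mul_inv, mul_inv]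
    ring
  · intro k hk hkl
    have hlmem : last ∈ (Finset.univ.erase i).erase k :=
      Finset.mem_erase.mpr ⟨fun h => hkl h.symm, hlastmem⟩
    rw [Polynomial.eval_mul, Polynomial.eval_prod]
    rw [Finset.prod_eq_zero hlmem]
    · simp
    · rw [hbde, hlast, sub_self, mul_zero]
  · intro h; exact absurd hlastmem h
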